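/- Let Q(x) = ∫_x^∞ (2π)^{−1/2} e^{−u²/2} du and Q^{−1} its inverse on (0,1). Fix k ≥ 1, priors P_0, P_1 ≥ 0 with P_0 + P_1 = 1, constants δ_1,…,δ_k ∈ (0,1), and for each level m ∈ {1,…,k+1} and hypothesis l ∈ {0,1} probabilities p_H(m,l) ∈ (0,1); for level k+1 let p_B(l) ∈ (0,1) with q_{k+1} < p_B(l) for l ∈ {0,1}, where q_m = max{p_H(m,0), p_H(m,1)}. For T > 0 define thresholds η_m(T) = T·q_m + Q^{−1}(δ_m)·√(T·q_m(1−q_m)) for m ≤ k and η_{k+1}(T) = T·q_{k+1} + Q^{−1}(δ')·√(T·q_{k+1}(1−q_{k+1})) for any fixed δ' ∈ (0,1), and set b(m,l,T) = Q( (η_m(T) − T·p_H(m,l)) / √(T·p_H(m,l)(1−p_H(m,l))) ), a(l,T) = Q( (η_{k+1}(T) − T·p_B(l)) / √(T·p_B(l)(1−p_B(l))) ), and P^iso(T) = Σ_{l∈{0,1}} P_l · a(l,T) · ∏_{m=1}^k (1 − b(m,l,T)). Then liminf_{T→∞} P^iso(T) ≥ ∏_{m=1}^k (1 − δ_m). 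-/
import Mathlib

open Filter Finset

/-- The standard Gaussian tail function `Q(x) = ∫ₓ^∞ (2π)^{-1/2} e^{-u²/2} du`. -/
noncomputable def gaussQ (x : ℝ) : ℝ :=
  ∫ u in Set.Ioi x, (Real.sqrt (2 * Real.pi))⁻¹ * Real.exp (-(u ^ 2) / 2)

noncomputable def gpdf (u : ℝ) : ℝ := (Real.sqrt (2 * Real.pi))⁻¹ * Real.exp (-(u ^ 2) / 2)

lemma gaussQ_eq (x : ℝ) : gaussQ x = ∫ u in Set.Ioi x, gpdf u := rfl

lemma gpdf_integrable : MeasureTheory.Integrable gpdf := by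
  have h := (integrable_exp_neg_mul_sq (by norm_num : (0:ℝ) < 1/2)).const_mul
    (Real.sqrt (2 * Real.pi))⁻¹
  have : gpdf = fun x : ℝ => (Real.sqrt (2 * Real.pi))⁻¹ * Real.exp (-(1/2) * x ^ 2) := by
    funext x; unfold gpdf; ring_nf
  rw [this]; exact h

lemma gpdf_integral : ∫ u, gpdf u = 1 := by
  have : ∫ u, gpdf u = (Real.sqrt (2 * Real.pi))⁻¹ * ∫ x : ℝ, Real.exp (-(1/2) * x ^ 2) := by
    rw [← MeasureTheory.integral_const_mul]
    congr 1; funext x; unfold gpdf; ring_nf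
  rw [this, integral_gaussian]
  rw [show Real.pi / (1/2) = 2 * Real.pi by ring]
  rw [inv_mul_cancel₀]
  positivity

lemma gaussQ_tendsto_atBot : Tendsto gaussQ atBot (nhds 1) := by
  have h := (MeasureTheory.aecover_Ioi (μ := MeasureTheory.volume)
    (l := atBot) (a := fun x : ℝ => x) tendsto_id).integral_tendsto_of_countably_generated
    gpdf_integrable
  rw [gpdf_integral] at h
  exact h.congr fun x => (gaussQ_eq x).symm

lemma gaussQ_tendsto_atTop : Tendsto gaussQ atTop (nhds 0) := by
  have h := (MeasureTheory.aecover_Iic (μ := MeasureTheory.volume)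
    (l := atTop) (b := fun x : ℝ => x) tendsto_id).integral_tendsto_of_countably_generated
    gpdf_integrable
  have h2 : Tendsto (fun x : ℝ => (∫ u, gpdf u) - ∫ u in Set.Iic x, gpdf u) atTop
      (nhds ((∫ u, gpdf u) - ∫ u, gpdf u)) := tendsto_const_nhds.sub h
  rw [sub_self] at h2
  refine h2.congr fun x => ?_
  rw [sub_eq_iff_eq_add, add_comm]
  exact (intervalIntegral.integral_Iic_add_Ioi
    (gpdf_integrable.integrableOn) (gpdf_integrable.integrableOn)).symm

lemma arg_eq {p qq T : ℝ} (C : ℝ) (hT : 0 < T) (hp0 : 0 < p) (hp1 : p < 1)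
    (hq0 : 0 ≤ qq) (hq1 : qq ≤ 1) :
    (T * qq + C * Real.sqrt (T * qq * (1 - qq)) - T * p) / Real.sqrt (T * p * (1 - p))
      = Real.sqrt T * ((qq - p) / Real.sqrt (p * (1 - p)))
        + C * (Real.sqrt (qq * (1 - qq)) / Real.sqrt (p * (1 - p))) := by
  have hs : 0 < Real.sqrt (p * (1 - p)) := Real.sqrt_pos.2 (by nlinarith)
  have hr : 0 < Real.sqrt T := Real.sqrt_pos.2 hT
  rw [mul_assoc T qq, Real.sqrt_mul hT.le, mul_assoc T p, Real.sqrt_mul hT.le]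
  have hT2 : T = Real.sqrt T * Real.sqrt T := (Real.mul_self_sqrt hT.le).symm
  set r := Real.sqrt T with hrdef
  have hsp : Real.sqrt p ≠ 0 := (Real.sqrt_pos.2 hp0).ne'
  have hsp1 : Real.sqrt (1 - p) ≠ 0 := (Real.sqrt_pos.2 (by linarith)).ne'
  rw [hT2]
  field_simp [hr.ne']
  ring

open MeasureTheory in
lemma tendsto_gauss_arg {p qq C : ℝ} (hp0 : 0 < p) (hp1 : p < 1) (hq0 : 0 ≤ qq) (hq1 : qq ≤ 1) :
    (qq < p → Tendsto (fun T : ℝ =>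
        gaussQ ((T * qq + C * Real.sqrt (T * qq * (1 - qq)) - T * p)
          / Real.sqrt (T * p * (1 - p)))) atTop (nhds 1))
    ∧ (p < qq → Tendsto (fun T : ℝ =>
        gaussQ ((T * qq + C * Real.sqrt (T * qq * (1 - qq)) - T * p)
          / Real.sqrt (T * p * (1 - p)))) atTop (nhds 0))
    ∧ (p = qq → Tendsto (fun T : ℝ =>
        gaussQ ((T * qq + C * Real.sqrt (T * qq * (1 - qq)) - T * p)
          / Real.sqrt (T * p * (1 - p)))) atTop (nhds (gaussQ C))) := by
  have hsq : Tendsto Real.sqrt atTop atTop :=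
    (tendsto_rpow_atTop (by norm_num : (0:ℝ) < 1/2)).congr
      (fun x => (Real.sqrt_eq_rpow x).symm)
  have hs : 0 < Real.sqrt (p * (1 - p)) := Real.sqrt_pos.2 (by nlinarith)
  have hev : ∀ᶠ T : ℝ in atTop,
      (T * qq + C * Real.sqrt (T * qq * (1 - qq)) - T * p) / Real.sqrt (T * p * (1 - p))
        = Real.sqrt T * ((qq - p) / Real.sqrt (p * (1 - p)))
          + C * (Real.sqrt (qq * (1 - qq)) / Real.sqrt (p * (1 - p))) := by
    filter_upwards [eventually_gt_atTop 0] with T hT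
    exact arg_eq C hT hp0 hp1 hq0 hq1
  refine ⟨fun hlt => ?_, fun hlt => ?_, fun heq => ?_⟩
  · -- qq < p : argument → -∞, gaussQ → 1
    have harg : Tendsto (fun T : ℝ => Real.sqrt T * ((qq - p) / Real.sqrt (p * (1 - p)))
        + C * (Real.sqrt (qq * (1 - qq)) / Real.sqrt (p * (1 - p)))) atTop atBot := by
      apply tendsto_atBot_add_const_right
      exact (hsq.atTop_mul_const_of_neg (by
        apply div_neg_of_neg_of_pos (by linarith) hs))
    exact (gaussQ_tendsto_atBot.comp harg).congr'
      (by filter_upwards [hev] with T h using by simp [Function.comp, h])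
  · -- p < qq : argument → ∞, gaussQ → 0
    have harg : Tendsto (fun T : ℝ => Real.sqrt T * ((qq - p) / Real.sqrt (p * (1 - p)))
        + C * (Real.sqrt (qq * (1 - qq)) / Real.sqrt (p * (1 - p)))) atTop atTop := by
      apply tendsto_atTop_add_const_right
      exact hsq.atTop_mul_const (div_pos (by linarith) hs)
    exact (gaussQ_tendsto_atTop.comp harg).congr'
      (by filter_upwards [hev] with T h using by simp [Function.comp, h])
  · -- p = qq : argument constant C
    subst heq
    refine tendsto_const_nhds.congr' ?_
    filter_upwards [hev] with T h
    rw [h, sub_self, zero_div, mul_zero, zero_add, div_self hs.ne', mul_one]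

/-- Asymptotic lower bound on the isolation probability of a Byzantine node at level
`k+1`:  `liminf_{T→∞} P^iso(T) ≥ ∏_{m=1}^k (1 − δ_m)`.  Honest levels are indexed
`0,…,k-1` and the Byzantine level is indexed `k`. -/
theorem stmt_18
    (Qinv : ℝ → ℝ) (hQinv : ∀ y ∈ Set.Ioo (0 : ℝ) 1, gaussQ (Qinv y) = y)
    (k : ℕ) (hk : 1 ≤ k)
    (P0 P1 : ℝ) (hP0 : 0 ≤ P0) (hP1 : 0 ≤ P1) (hP : P0 + P1 = 1)
    (δ : ℕ → ℝ) (hδ : ∀ m < k, δ m ∈ Set.Ioo (0 : ℝ) 1)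
    (δ' : ℝ) (hδ' : δ' ∈ Set.Ioo (0 : ℝ) 1)
    (pH : ℕ → ℕ → ℝ) (hpH : ∀ m ≤ k, ∀ l < 2, pH m l ∈ Set.Ioo (0 : ℝ) 1)
    (pB : ℕ → ℝ) (hpB : ∀ l < 2, pB l ∈ Set.Ioo (0 : ℝ) 1)
    (q : ℕ → ℝ) (hq : ∀ m ≤ k, q m = max (pH m 0) (pH m 1))
    (hqB : ∀ l < 2, q k < pB l)
    (η : ℕ → ℝ → ℝ)
    (hη : ∀ m < k, ∀ T : ℝ,
      η m T = T * q m + Qinv (δ m) * Real.sqrt (T * q m * (1 - q m)))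
    (ηB : ℝ → ℝ)
    (hηB : ∀ T : ℝ, ηB T = T * q k + Qinv δ' * Real.sqrt (T * q k * (1 - q k)))
    (b : ℕ → ℕ → ℝ → ℝ)
    (hb : ∀ m < k, ∀ l < 2, ∀ T : ℝ,
      b m l T = gaussQ ((η m T - T * pH m l) / Real.sqrt (T * pH m l * (1 - pH m l))))
    (a : ℕ → ℝ → ℝ)
    (ha : ∀ l < 2, ∀ T : ℝ,
      a l T = gaussQ ((ηB T - T * pB l) / Real.sqrt (T * pB l * (1 - pB l))))
    (Piso : ℝ → ℝ)
    (hPiso : ∀ T : ℝ, Piso T =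
      P0 * (a 0 T * ∏ m ∈ range k, (1 - b m 0 T)) +
      P1 * (a 1 T * ∏ m ∈ range k, (1 - b m 1 T))) :
    ∏ m ∈ range k, (1 - δ m) ≤ liminf Piso atTop := by
  classical
  -- basic facts on q
  have hqIoo : ∀ m ≤ k, q m ∈ Set.Ioo (0 : ℝ) 1 := by
    intro m hm
    rw [hq m hm]
    have h0 := hpH m hm 0 (by norm_num)
    have h1 := hpH m hm 1 (by norm_num)
    constructor
    · exact lt_max_of_lt_left h0.1
    · exact max_lt h0.2 h1.2
  have hple : ∀ m ≤ k, ∀ l < 2, pH m l ≤ q m := by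
    intro m hm l hl
    rw [hq m hm]
    interval_cases l
    · exact le_max_left _ _
    · exact le_max_right _ _
  -- limits of b m l
  set c : ℕ → ℕ → ℝ := fun m l => if pH m l = q m then δ m else 0 with hc
  have hbtend : ∀ m < k, ∀ l < 2, Tendsto (b m l) atTop (nhds (c m l)) := by
    intro m hm l hl
    have hpml := hpH m hm.le l hl
    have hqm := hqIoo m hm.le
    have key := tendsto_gauss_arg (C := Qinv (δ m)) hpml.1 hpml.2 hqm.1.le hqm.2.le
    have hbeq : ∀ T : ℝ, b m l T =
        gaussQ ((T * q m + Qinv (δ m) * Real.sqrt (T * q m * (1 - q m)) - T * pH m l)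
          / Real.sqrt (T * pH m l * (1 - pH m l))) := by
      intro T; rw [hb m hm l hl T, hη m hm T]
    rcases eq_or_lt_of_le (hple m hm.le l hl) with heq | hlt
    · -- pH = q : limit gaussQ (Qinv (δ m)) = δ m
      have h := key.2.2 heq
      rw [hQinv (δ m) (hδ m hm)] at h
      simp only [hc, if_pos heq]
      exact h.congr fun T => (hbeq T).symm
    · have h := key.2.1 hlt
      simp only [hc, if_neg (ne_of_lt hlt)]
      exact h.congr fun T => (hbeq T).symm
  -- limits of a l
  have hatend : ∀ l < 2, Tendsto (a l) atTop (nhds 1) := by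
    intro l hl
    have hpbl := hpB l hl
    have hqk := hqIoo k le_rfl
    have key := (tendsto_gauss_arg (C := Qinv δ') hpbl.1 hpbl.2 hqk.1.le hqk.2.le).1
      (hqB l hl)
    refine key.congr fun T => ?_
    rw [ha l hl T, hηB T]
  -- limit of Piso
  have hprod : ∀ l < 2, Tendsto (fun T => ∏ m ∈ range k, (1 - b m l T)) atTop
      (nhds (∏ m ∈ range k, (1 - c m l))) := by
    intro l hl
    exact tendsto_finset_prod _ fun m hm =>
      tendsto_const_nhds.sub (hbtend m (mem_range.1 hm) l hl)
  have hPtend : Tendsto Piso atTop (nhds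
      (P0 * (1 * ∏ m ∈ range k, (1 - c m 0)) + P1 * (1 * ∏ m ∈ range k, (1 - c m 1)))) := by
    have h0 := ((hatend 0 (by norm_num)).mul (hprod 0 (by norm_num))).const_mul P0
    have h1 := ((hatend 1 (by norm_num)).mul (hprod 1 (by norm_num))).const_mul P1
    exact (h0.add h1).congr fun T => (hPiso T).symm
  rw [hPtend.liminf_eq]
  -- final inequality
  have hδprod : (0:ℝ) ≤ ∏ m ∈ range k, (1 - δ m) := by
    apply prod_nonneg
    intro m hm
    have := hδ m (mem_range.1 hm)
    linarith [this.2]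
  have hclow : ∀ l < 2, ∏ m ∈ range k, (1 - δ m) ≤ ∏ m ∈ range k, (1 - c m l) := by
    intro l hl
    apply Finset.prod_le_prod
    · intro m hm
      have := hδ m (mem_range.1 hm)
      linarith [this.2]
    · intro m hm
      have := hδ m (mem_range.1 hm)
      simp only [hc]
      split_ifs
      · linarith
      · linarith [this.1]
  calc ∏ m ∈ range k, (1 - δ m) = (P0 + P1) * ∏ m ∈ range k, (1 - δ m) := by rw [hP, one_mul]
    _ = P0 * ∏ m ∈ range k, (1 - δ m) + P1 * ∏ m ∈ range k, (1 - δ m) := by ring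
    _ ≤ P0 * (1 * ∏ m ∈ range k, (1 - c m 0)) + P1 * (1 * ∏ m ∈ range k, (1 - c m 1)) := by
        rw [one_mul, one_mul]
        exact add_le_add
          (mul_le_mul_of_nonneg_left (hclow 0 (by norm_num)) hP0)
          (mul_le_mul_of_nonneg_left (hclow 1 (by norm_num)) hP1)
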